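/- There is no infinite strictly ascending chain I₁ ⊊ I₂ ⊊ I₃ ⊊ ⋯ of homogeneous tropical ideals in R[x₀,…,xₙ]. -/

import Mathlib

open MvPolynomial

/-- `I` is a homogeneous tropical ideal of `R[x₀,…,xₙ]`, where `R = Tropical R₀` is a
valuative semifield (the multiplicative group `R₀ \ {∞}` is totally ordered and tropical
addition is `min`): `I` is a homogeneous ideal each of whose graded pieces `I_d` is the
set of vectors of a valuated matroid on the degree-`d` monomials, i.e. satisfies the
vector (monomial) elimination axiom. -/
def IsHomogTropicalIdeal {n : ℕ} {R₀ : Type*} [LinearOrderedAddCommGroupWithTop R₀]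
    (I : Ideal (MvPolynomial (Fin (n + 1)) (Tropical R₀))) : Prop :=
  (∀ f ∈ I, ∀ d : ℕ, homogeneousComponent d f ∈ I) ∧
  ∀ d : ℕ, ∀ f ∈ I, ∀ g ∈ I, f.IsHomogeneous d → g.IsHomogeneous d →
    ∀ u : Fin (n + 1) →₀ ℕ, coeff u f = coeff u g → coeff u f ≠ 0 →
      ∃ h ∈ I, h.IsHomogeneous d ∧ coeff u h = 0 ∧
        (∀ v, coeff v f + coeff v g ≤ coeff v h) ∧
        (∀ v, coeff v f ≠ coeff v g → coeff v h = coeff v f + coeff v g)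

/-- The Hilbert function of a homogeneous tropical ideal: `H_I(d)` is the rank of the
valuated matroid `M_d(I)` on the degree-`d` monomials whose vectors are `I_d`, i.e. the
maximal size of a set `S` of degree-`d` monomials supporting no nonzero element of
`I_d`. -/
noncomputable def tropicalHilbert {n : ℕ} {R₀ : Type*} [LinearOrderedAddCommGroupWithTop R₀]
    (I : Ideal (MvPolynomial (Fin (n + 1)) (Tropical R₀))) (d : ℕ) : ℕ :=
  sSup {k : ℕ | ∃ S : Finset ((Fin (n + 1)) →₀ ℕ), S.card = k ∧
    (∀ u ∈ S, (∑ i ∈ u.support, u i) = d) ∧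
    ∀ f ∈ I, f.IsHomogeneous d → f ≠ 0 → ¬ f.support ⊆ S}

namespace TropACC

/-- Abbreviation for the type of monomials. -/
abbrev Mon (n : ℕ) := Fin (n + 1) →₀ ℕ

/-- Abbreviation for the tropical polynomial semiring. -/
abbrev Pol (n : ℕ) (R₀ : Type*) [LinearOrderedAddCommGroupWithTop R₀] :=
  MvPolynomial (Fin (n + 1)) (Tropical R₀)

variable {n : ℕ} {R₀ : Type*} [LinearOrderedAddCommGroupWithTop R₀]

/-! ### Tropical helper lemmas -/

lemma trop_ne_zero_iff {x : Tropical R₀} : x ≠ 0 ↔ Tropical.untrop x ≠ ⊤ := by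
  constructor
  · intro h h'
    exact h (by rw [← Tropical.trop_untrop x, h', Tropical.trop_top])
  · intro h h'
    exact h (by rw [h', Tropical.untrop_zero])

lemma trop_eq_zero_iff {x : Tropical R₀} : x = 0 ↔ Tropical.untrop x = ⊤ := by
  rw [← not_iff_not]; exact trop_ne_zero_iff

lemma trop_mul_ne_zero {x y : Tropical R₀} (hx : x ≠ 0) (hy : y ≠ 0) : x * y ≠ 0 := by
  rw [trop_ne_zero_iff, Tropical.untrop_mul]
  rw [trop_ne_zero_iff] at hx hy
  simp [LinearOrderedAddCommGroupWithTop.add_eq_top, hx, hy]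

lemma trop_add_eq_zero {x y : Tropical R₀} (h : x + y = 0) : x = 0 ∧ y = 0 := by
  rw [trop_eq_zero_iff, Tropical.untrop_add, min_eq_top] at h
  exact ⟨trop_eq_zero_iff.2 h.1, trop_eq_zero_iff.2 h.2⟩

lemma eq_zero_of_zero_le {x : Tropical R₀} (h : (0 : Tropical R₀) ≤ x) : x = 0 :=
  le_antisymm (Tropical.le_zero x) h

/-- division: given `x ≠ 0` and any `y`, there is `t` with `t * x = y`. -/
lemma trop_exists_scale {x : Tropical R₀} (hx : x ≠ 0) (y : Tropical R₀) :
    ∃ t : Tropical R₀, t * x = y := by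
  refine ⟨Tropical.trop (Tropical.untrop y - Tropical.untrop x), ?_⟩
  apply Tropical.untrop_injective
  rw [Tropical.untrop_mul, Tropical.untrop_trop, sub_eq_add_neg, add_assoc]
  rw [add_comm (-Tropical.untrop x)]
  rw [LinearOrderedAddCommGroupWithTop.add_neg_cancel_of_ne_top (trop_ne_zero_iff.1 hx), add_zero]

/-! ### Leading monomials -/

/-- The leading monomial of `f` w.r.t. the lexicographic order (junk value `⊥` for `f = 0`). -/
noncomputable def lm (f : Pol n R₀) : Lex (Mon n) := f.support.sup toLex

lemma le_lm {f : Pol n R₀} {u : Mon n} (hu : u ∈ f.support) : toLex u ≤ lm f :=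
  Finset.le_sup hu

lemma lm_mem {f : Pol n R₀} (hf : f ≠ 0) : ofLex (lm f) ∈ f.support := by
  have hne : f.support.Nonempty := support_nonempty.2 hf
  obtain ⟨b, hb, he⟩ := Finset.exists_mem_eq_sup' hne (toLex : Mon n → Lex (Mon n))
  have : lm f = toLex b := by rw [lm, ← Finset.sup'_eq_sup hne, he]
  rw [this]; exact hb

lemma lm_coeff_ne_zero {f : Pol n R₀} (hf : f ≠ 0) : coeff (ofLex (lm f)) f ≠ 0 :=
  mem_support_iff.1 (lm_mem hf)

lemma lm_le_of_support {f : Pol n R₀} {u : Lex (Mon n)} (h : ∀ x ∈ f.support, toLex x ≤ u) :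
    lm f ≤ u := Finset.sup_le h

lemma lm_lt_of_support {f : Pol n R₀} (hf : f ≠ 0) {u : Lex (Mon n)}
    (h : ∀ x ∈ f.support, toLex x < u) : lm f < u := by
  have := h _ (lm_mem hf)
  simpa using this

/-! ### Support lemmas -/

/-- The support of an "eliminated" element is contained in the union of the supports. -/
lemma support_subset_of_min_le {f g h : Pol n R₀}
    (hle : ∀ v : Mon n, coeff v f + coeff v g ≤ coeff v h) :
    h.support ⊆ f.support ∪ g.support := by
  intro x hx
  by_contra hx'
  simp only [Finset.mem_union, mem_support_iff, not_or, not_not] at hx'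
  have := hle x
  rw [hx'.1, hx'.2, add_zero] at this
  exact mem_support_iff.1 hx (eq_zero_of_zero_le this)

lemma support_C_mul_subset (t : Tropical R₀) (f : Pol n R₀) :
    (C t * f).support ⊆ f.support := by
  intro x hx
  rw [mem_support_iff, coeff_C_mul] at hx
  rw [mem_support_iff]
  intro h0
  exact hx (by rw [h0, mul_zero])

lemma degree_eq_of_mem_support {f : Pol n R₀} {d : ℕ} (hf : f.IsHomogeneous d) {x : Mon n}
    (hx : x ∈ f.support) : x.degree = d := by
  by_contra h
  exact mem_support_iff.1 hx (hf.coeff_eq_zero h)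

/-! ### The chipping lemma -/

variable {I J : Ideal (Pol n R₀)}

/-- Key "chipping" lemma: given a nonzero homogeneous `c ∈ J` of leading monomial `u`
such that every element of `J` with smaller leading monomial already belongs to `I`, from
any `v ∈ I` of degree `d` with `lm v ≤ u` and the same coefficient as `c` at `u`, we can
produce a nonzero element of `I` whose support is contained in that of `c`. -/
lemma chip (hI : IsHomogTropicalIdeal I) (hJ : IsHomogTropicalIdeal J) (hIJ : I ≤ J)
    {d : ℕ} {u : Lex (Mon n)}
    (OH : ∀ w : Pol n R₀, w ∈ J → w.IsHomogeneous d → w ≠ 0 → lm w < u → w ∈ I)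
    {c : Pol n R₀} (hcJ : c ∈ J) (hcd : c.IsHomogeneous d) (hc0 : c ≠ 0) (hlmc : lm c = u) :
    ∀ k : ℕ, ∀ v : Pol n R₀, v ∈ I → v.IsHomogeneous d → lm v ≤ u →
      coeff (ofLex u) v = coeff (ofLex u) c → (v.support \ c.support).card ≤ k →
      ∃ dd : Pol n R₀, dd ∈ I ∧ dd ≠ 0 ∧ dd.IsHomogeneous d ∧ dd.support ⊆ c.support := by
  have hcu : coeff (ofLex u) c ≠ 0 := by
    rw [← hlmc]; exact lm_coeff_ne_zero hc0
  intro k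
  induction k with
  | zero =>
    intro v hvI hvd _ hvu hcard
    refine ⟨v, hvI, ?_, hvd, ?_⟩
    · intro h0; rw [h0, coeff_zero] at hvu; exact hcu hvu.symm
    · rw [← Finset.sdiff_eq_empty_iff_subset]
      exact Finset.card_eq_zero.1 (Nat.le_zero.1 hcard)
  | succ k IH =>
    intro v hvI hvd hlmv hvu hcard
    by_cases hsub : v.support ⊆ c.support
    · refine ⟨v, hvI, ?_, hvd, hsub⟩
      intro h0; rw [h0, coeff_zero] at hvu; exact hcu hvu.symm
    · obtain ⟨e₁, he₁v, he₁c⟩ := Finset.not_subset.1 hsub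
      have hvu0 : coeff (ofLex u) v ≠ 0 := by rw [hvu]; exact hcu
      -- Step 1 : eliminate `u` from `(v, c)` inside `J`
      obtain ⟨h, hhJ, hhd, hhu, hhle, hhpin⟩ :=
        hJ.2 d v (hIJ hvI) c hcJ hvd hcd (ofLex u) hvu hvu0
      have hsupph : h.support ⊆ v.support ∪ c.support := support_subset_of_min_le hhle
      have he₁cz : coeff e₁ c = 0 := notMem_support_iff.1 he₁c
      have he₁ne : coeff e₁ v ≠ coeff e₁ c := by
        rw [he₁cz]; exact mem_support_iff.1 he₁v
      have he₁h : coeff e₁ h = coeff e₁ v := by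
        rw [hhpin e₁ he₁ne, he₁cz, add_zero]
      have hh0 : h ≠ 0 := by
        intro h0
        rw [h0, coeff_zero] at he₁h
        exact mem_support_iff.1 he₁v he₁h.symm
      have hboundvc : ∀ x ∈ v.support ∪ c.support, toLex x ≤ u := by
        intro x hx
        rcases Finset.mem_union.1 hx with hx | hx
        · exact (le_lm hx).trans hlmv
        · exact hlmc ▸ le_lm hx
      have hhI : h ∈ I := by
        refine OH h hhJ hhd hh0 (lm_lt_of_support hh0 ?_)
        intro x hx
        refine lt_of_le_of_ne (hboundvc x (hsupph hx)) ?_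
        intro hxe
        have : x = ofLex u := by
          have := congrArg ofLex hxe; simpa using this
        rw [this] at hx
        exact mem_support_iff.1 hx hhu
      -- Step 2 : eliminate `e₁` from `(v, h)` inside `I`
      obtain ⟨h₂, hh₂I, hh₂d, hh₂e₁, hh₂le, hh₂pin⟩ :=
        hI.2 d v hvI h hhI hvd hhd e₁ he₁h.symm (mem_support_iff.1 he₁v)
      have hsupph₂ : h₂.support ⊆ v.support ∪ c.support := by
        refine (support_subset_of_min_le hh₂le).trans ?_
        intro x hx
        rcases Finset.mem_union.1 hx with hx | hx
        · exact Finset.mem_union_left _ hx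
        · exact hsupph hx
      have hune : coeff (ofLex u) v ≠ coeff (ofLex u) h := by
        rw [hhu]; exact hvu0
      have hh₂u : coeff (ofLex u) h₂ = coeff (ofLex u) c := by
        rw [hh₂pin (ofLex u) hune, hhu, add_zero, hvu]
      refine IH h₂ hh₂I hh₂d (lm_le_of_support fun x hx => hboundvc x (hsupph₂ hx)) hh₂u ?_
      have hss : h₂.support \ c.support ⊆ (v.support \ c.support).erase e₁ := by
        intro x hx
        rcases Finset.mem_sdiff.1 hx with ⟨hx1, hx2⟩
        refine Finset.mem_erase.2 ⟨?_, ?_⟩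
        · intro hxe; rw [hxe] at hx1; exact mem_support_iff.1 hx1 hh₂e₁
        · rcases Finset.mem_union.1 (hsupph₂ hx1) with hx3 | hx3
          · exact Finset.mem_sdiff.2 ⟨hx3, hx2⟩
          · exact absurd hx3 hx2
      have := Finset.card_le_card hss
      rw [Finset.card_erase_of_mem (Finset.mem_sdiff.2 ⟨he₁v, he₁c⟩)] at this
      omega

/-! ### Rigidity of minimal-support elements -/

/-- Any nonzero element of `J` whose support is contained in the support of a
minimal-support element `c` and which agrees with `c` at one point of its support
equals `c`. -/
lemma rigid (hJ : IsHomogTropicalIdeal J) {d : ℕ} {c w : Pol n R₀}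
    (hcJ : c ∈ J) (hcd : c.IsHomogeneous d)
    (hmin : ∀ w' : Pol n R₀, w' ∈ J → w'.IsHomogeneous d → w' ≠ 0 →
      w'.support ⊆ c.support → w'.support = c.support)
    (hwJ : w ∈ J) (hwd : w.IsHomogeneous d) (hws : w.support ⊆ c.support)
    {e : Mon n} (hew : e ∈ w.support) (hec : coeff e w = coeff e c) : w = c := by
  by_contra hne
  obtain ⟨g, hg⟩ : ∃ g : Mon n, coeff g w ≠ coeff g c := by
    by_contra hg
    push_neg at hg
    exact hne (MvPolynomial.ext _ _ hg)
  obtain ⟨h, hhJ, hhd, hhe, hhle, hhpin⟩ :=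
    hJ.2 d w hwJ c hcJ hwd hcd e hec (mem_support_iff.1 hew)
  have hh0 : h ≠ 0 := by
    intro h0
    have := hhpin g hg
    rw [h0, coeff_zero] at this
    obtain ⟨h1, h2⟩ := trop_add_eq_zero this.symm
    rw [h1, h2] at hg
    exact hg rfl
  have hsupph : h.support ⊆ c.support := by
    refine (support_subset_of_min_le hhle).trans ?_
    exact Finset.union_subset hws Finset.Subset.rfl
  have := hmin h hhJ hhd hh0 hsupph
  have hec' : e ∈ h.support := this ▸ hws hew
  exact mem_support_iff.1 hec' hhe

/-! ### The circuit case of the main induction -/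

lemma circuitCase (hI : IsHomogTropicalIdeal I) (hJ : IsHomogTropicalIdeal J) (hIJ : I ≤ J)
    {d : ℕ} {u : Lex (Mon n)}
    (OH : ∀ w : Pol n R₀, w ∈ J → w.IsHomogeneous d → w ≠ 0 → lm w < u → w ∈ I)
    {c : Pol n R₀} (hcJ : c ∈ J) (hcd : c.IsHomogeneous d) (hc0 : c ≠ 0) (hlmc : lm c = u)
    (hmin : ∀ w' : Pol n R₀, w' ∈ J → w'.IsHomogeneous d → w' ≠ 0 →
      w'.support ⊆ c.support → w'.support = c.support)
    {g : Pol n R₀} (hgI : g ∈ I) (hg0 : g ≠ 0) (hgd : ∃ d', g.IsHomogeneous d')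
    (hlmg : lm g = u) : c ∈ I := by
  obtain ⟨d', hgd⟩ := hgd
  -- `g` is in fact homogeneous of degree `d`
  have hdd' : d' = d := by
    have h1 : (ofLex (lm g)).degree = d' := degree_eq_of_mem_support hgd (lm_mem hg0)
    have h2 : (ofLex (lm c)).degree = d := degree_eq_of_mem_support hcd (lm_mem hc0)
    rw [hlmg] at h1
    rw [hlmc] at h2
    rw [← h1, ← h2]
  subst hdd'
  have hgu : coeff (ofLex u) g ≠ 0 := by rw [← hlmg]; exact lm_coeff_ne_zero hg0
  obtain ⟨t, ht⟩ := trop_exists_scale hgu (coeff (ofLex u) c)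
  set v : Pol n R₀ := C t * g with hv
  have hvI : v ∈ I := Ideal.mul_mem_left I (C t) hgI
  have hvu : coeff (ofLex u) v = coeff (ofLex u) c := by rw [hv, coeff_C_mul, ht]
  have hlmv : lm v ≤ u := by
    refine lm_le_of_support fun x hx => ?_
    have := le_lm (support_C_mul_subset t g hx)
    rw [hlmg] at this
    exact this
  obtain ⟨dd, hddI, hdd0, hddd, hdds⟩ :=
    chip hI hJ hIJ OH hcJ hcd hc0 hlmc (v.support \ c.support).card v hvI (hgd.C_mul t)
      hlmv hvu le_rfl
  obtain ⟨e, he⟩ := support_nonempty.2 hdd0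
  obtain ⟨t', ht'⟩ := trop_exists_scale (mem_support_iff.1 he) (coeff e c)
  set dd' : Pol n R₀ := C t' * dd with hdd'
  have hdd'I : dd' ∈ I := Ideal.mul_mem_left I (C t') hddI
  have hce : coeff e c ≠ 0 := mem_support_iff.1 (hdds he)
  have hdd'e : coeff e dd' = coeff e c := by rw [hdd', coeff_C_mul, ht']
  have hedd' : e ∈ dd'.support := mem_support_iff.2 (by rw [hdd'e]; exact hce)
  have : dd' = c :=
    rigid hJ hcJ hcd hmin (hIJ hdd'I) (hddd.C_mul t')
      ((support_C_mul_subset t' dd).trans hdds) hedd' hdd'e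
  rw [← this]
  exact hdd'I

/-! ### helper: subtraction cancellation in `R₀` -/

lemma sub_add_cancel_of_ne_top {a b : R₀} (hb : b ≠ ⊤) : a - b + b = a := by
  rw [sub_eq_add_neg, add_assoc, add_comm (-b) b,
    LinearOrderedAddCommGroupWithTop.add_neg_cancel_of_ne_top hb, add_zero]

/-! ### The key theorem: `J` is contained in `I` when they have the same leading monomials -/

theorem key (hI : IsHomogTropicalIdeal I) (hJ : IsHomogTropicalIdeal J) (hIJ : I ≤ J)
    (hLM : ∀ f : Pol n R₀, f ∈ J → f ≠ 0 → (∃ d', f.IsHomogeneous d') →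
        ∃ g : Pol n R₀, g ∈ I ∧ g ≠ 0 ∧ (∃ d', g.IsHomogeneous d') ∧ lm g = lm f) :
    ∀ (d : ℕ) (w : Pol n R₀), w ∈ J → w.IsHomogeneous d → w ∈ I := by
  suffices H : ∀ u : Lex (Mon n), ∀ (d : ℕ) (w : Pol n R₀),
      w ∈ J → w.IsHomogeneous d → w ≠ 0 → lm w ≤ u → w ∈ I by
    intro d w hwJ hwd
    rcases eq_or_ne w 0 with rfl | hw0
    · exact zero_mem I
    · exact H (lm w) d w hwJ hwd hw0 le_rfl
  intro u
  induction u using WellFoundedLT.induction with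
  | ind u IHu =>
  suffices Q : ∀ m : ℕ, ∀ (d : ℕ) (w : Pol n R₀),
      w ∈ J → w.IsHomogeneous d → w ≠ 0 → lm w ≤ u → w.support.card ≤ m → w ∈ I by
    intro d w hwJ hwd hw0 hlmw
    exact Q w.support.card d w hwJ hwd hw0 hlmw le_rfl
  intro m
  induction m using Nat.strong_induction_on with
  | _ m IHm =>
  intro d w hwJ hwd hw0 hlmw hcard
  rcases lt_or_eq_of_le hlmw with hlt | heq
  · exact IHu (lm w) hlt d w hwJ hwd hw0 le_rfl
  have OH : ∀ w' : Pol n R₀, w' ∈ J → w'.IsHomogeneous d → w' ≠ 0 → lm w' < u → w' ∈ I :=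
    fun w' h1 h2 h3 h4 => IHu (lm w') h4 d w' h1 h2 h3 le_rfl
  by_cases hminQ : ∀ w' : Pol n R₀, w' ∈ J → w'.IsHomogeneous d → w' ≠ 0 →
      w'.support ⊆ w.support → w'.support = w.support
  · -- `w` has minimal support : the circuit case
    obtain ⟨g, hgI, hg0, hgd, hlmg⟩ := hLM w hwJ hw0 ⟨d, hwd⟩
    exact circuitCase hI hJ hIJ OH hwJ hwd hw0 heq hminQ hgI hg0 hgd (by rw [hlmg, heq])
  · -- `w` does not have minimal support : split it
    push_neg at hminQ
    obtain ⟨w', hw'J, hw'd, hw'0, hw's, hw'ne⟩ := hminQ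
    have hw'ss : w'.support ⊂ w.support := Finset.ssubset_iff_subset_ne.2 ⟨hw's, hw'ne⟩
    have hcard' : w'.support.card < w.support.card := Finset.card_lt_card hw'ss
    have hsuppw : ∀ x ∈ w.support, toLex x ≤ u := fun x hx => heq ▸ le_lm hx
    have hlmw' : lm w' ≤ u := lm_le_of_support fun x hx => hsuppw x (hw's hx)
    have hw'I : w' ∈ I :=
      IHm w'.support.card (lt_of_lt_of_le hcard' hcard) d w' hw'J hw'd hw'0 hlmw' le_rfl
    -- scale `w'` so that it dominates `w` and touches it at `f₀`
    have hne : w'.support.Nonempty := support_nonempty.2 hw'0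
    set F : Mon n → R₀ := fun f => Tropical.untrop (coeff f w) - Tropical.untrop (coeff f w')
      with hF
    obtain ⟨f₀, hf₀, hf₀e⟩ := Finset.exists_mem_eq_sup' hne F
    set lam : R₀ := w'.support.sup' hne F with hlam
    set v' : Pol n R₀ := C (Tropical.trop lam) * w' with hv'
    have hv'I : v' ∈ I := Ideal.mul_mem_left I _ hw'I
    have hv'J : v' ∈ J := hIJ hv'I
    have hv'd : v'.IsHomogeneous d := hw'd.C_mul _
    have hv'supp : v'.support ⊆ w'.support := support_C_mul_subset _ _
    have hv'coeff : ∀ f : Mon n, coeff f v' = Tropical.trop lam * coeff f w' := by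
      intro f; rw [hv', coeff_C_mul]
    -- `v'` dominates `w`
    have hdom : ∀ f : Mon n, coeff f w ≤ coeff f v' := by
      intro f
      by_cases hf : f ∈ w'.support
      · rw [← Tropical.untrop_le_iff, hv'coeff, Tropical.untrop_mul, Tropical.untrop_trop]
        have h1 : F f ≤ lam := Finset.le_sup' F hf
        have h2 : Tropical.untrop (coeff f w') ≠ ⊤ :=
          trop_ne_zero_iff.1 (mem_support_iff.1 hf)
        calc Tropical.untrop (coeff f w)
            = F f + Tropical.untrop (coeff f w') := (sub_add_cancel_of_ne_top h2).symm
          _ ≤ lam + Tropical.untrop (coeff f w') := add_le_add_left h1 _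
      · rw [hv'coeff, notMem_support_iff.1 hf, mul_zero]
        exact Tropical.le_zero _
    -- `v'` touches `w` at `f₀`
    have htouch : coeff f₀ v' = coeff f₀ w := by
      apply Tropical.untrop_injective
      rw [hv'coeff, Tropical.untrop_mul, Tropical.untrop_trop, hf₀e]
      exact sub_add_cancel_of_ne_top (trop_ne_zero_iff.1 (mem_support_iff.1 hf₀))
    have hf₀w : f₀ ∈ w.support := hw's hf₀
    -- eliminate `f₀` from `(w, v')` inside `J`
    obtain ⟨h, hhJ, hhd, hhf₀, hhle, hhpin⟩ :=
      hJ.2 d w hwJ v' hv'J hwd hv'd f₀ htouch.symm (mem_support_iff.1 hf₀w)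
    have hsupph : h.support ⊆ w.support := by
      refine (support_subset_of_min_le hhle).trans ?_
      exact Finset.union_subset Finset.Subset.rfl (hv'supp.trans hw's)
    have hsupph' : h.support ⊂ w.support := by
      refine Finset.ssubset_iff_subset_ne.2 ⟨hsupph, ?_⟩
      intro hhs
      have : f₀ ∈ h.support := hhs ▸ hf₀w
      exact mem_support_iff.1 this hhf₀
    have hhI : h ∈ I := by
      rcases eq_or_ne h 0 with rfl | hh0
      · exact zero_mem I
      · exact IHm h.support.card
          (lt_of_lt_of_le (Finset.card_lt_card hsupph') hcard) d h hhJ hhd hh0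
          (lm_le_of_support fun x hx => hsuppw x (hsupph hx)) le_rfl
    -- `w = v' + h`
    have hsplit : w = v' + h := by
      apply MvPolynomial.ext
      intro x
      rw [coeff_add]
      by_cases hx : coeff x w = coeff x v'
      · have hwh : coeff x w ≤ coeff x h := by
          have := hhle x
          rw [← hx, Tropical.add_self] at this
          exact this
        rw [← hx, Tropical.add_eq_left hwh]
      · have hxx : coeff x h = coeff x w := by
          rw [hhpin x hx]
          exact Tropical.add_eq_left (hdom x)
        rw [hxx]
        exact (Tropical.add_eq_right (hdom x)).symm
    rw [hsplit]
    exact Ideal.add_mem I hv'I hhI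

/-! ### Leading monomial sets -/

/-- The set of leading monomials of nonzero homogeneous elements of `I`. -/
def lms (I : Ideal (Pol n R₀)) : Set (Lex (Mon n)) :=
  {u | ∃ f : Pol n R₀, f ∈ I ∧ f ≠ 0 ∧ (∃ d, f.IsHomogeneous d) ∧ lm f = u}

lemma lms_mono {I J : Ideal (Pol n R₀)} (hIJ : I ≤ J) : lms I ⊆ lms J := by
  rintro u ⟨f, hfI, hf0, hfd, hflm⟩
  exact ⟨f, hIJ hfI, hf0, hfd, hflm⟩

lemma one_ne_zero'' : (1 : Tropical R₀) ≠ 0 := by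
  rw [trop_ne_zero_iff, Tropical.untrop_one]
  exact fun h => LinearOrderedAddCommGroupWithTop.top_ne_zero h.symm

/-- `lms I` is upward closed for divisibility of monomials. -/
lemma lms_upward {I : Ideal (Pol n R₀)} {u : Lex (Mon n)} (hu : u ∈ lms I)
    {m' : Mon n} (hle : ofLex u ≤ m') : toLex m' ∈ lms I := by
  obtain ⟨f, hfI, hf0, ⟨d, hfd⟩, hflm⟩ := hu
  set k : Mon n := m' - ofLex u with hk
  have hkm : k + ofLex u = m' := by
    rw [hk]; exact tsub_add_cancel_of_le hle
  set g : Pol n R₀ := monomial k (1 : Tropical R₀) * f with hg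
  have hgI : g ∈ I := Ideal.mul_mem_left I _ hfI
  have hgcoeff : ∀ x : Mon n, coeff (k + x) g = coeff x f := by
    intro x
    rw [hg, coeff_monomial_mul, one_mul]
  have hgne : coeff (k + ofLex u) g ≠ 0 := by
    rw [hgcoeff]
    rw [← hflm]
    exact lm_coeff_ne_zero hf0
  have hg0 : g ≠ 0 := fun h0 => hgne (by rw [h0, coeff_zero])
  have hgd : g.IsHomogeneous (k.degree + d) :=
    (isHomogeneous_monomial (1 : Tropical R₀) rfl).mul hfd
  have hsupp : ∀ x ∈ g.support, k ≤ x ∧ coeff (x - k) f ≠ 0 := by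
    intro x hx
    have hcx := mem_support_iff.1 hx
    rw [hg, coeff_monomial_mul'] at hcx
    by_cases hkx : k ≤ x
    · refine ⟨hkx, ?_⟩
      rw [if_pos hkx, one_mul] at hcx
      exact hcx
    · rw [if_neg hkx] at hcx
      exact absurd rfl hcx
  have hlmg : lm g = toLex m' := by
    apply le_antisymm
    · refine lm_le_of_support fun x hx => ?_
      obtain ⟨hkx, hcx⟩ := hsupp x hx
      have h1 : toLex (x - k) ≤ lm f := le_lm (mem_support_iff.2 hcx)
      rw [hflm] at h1
      have h2 : toLex x = toLex k + toLex (x - k) := by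
        rw [← toLex_add]
        congr 1
        rw [add_tsub_cancel_of_le hkx]
      rw [h2, ← hkm, toLex_add]
      exact add_le_add_right h1 _
    · have : toLex (k + ofLex u) ≤ lm g := le_lm (mem_support_iff.2 hgne)
      rw [hkm] at this
      exact this
  exact ⟨g, hgI, hg0, ⟨k.degree + d, hgd⟩, hlmg⟩

/-- If `I ≤ J` have the same leading monomials then `J ≤ I`. -/
lemma le_of_lms_subset {I J : Ideal (Pol n R₀)} (hI : IsHomogTropicalIdeal I)
    (hJ : IsHomogTropicalIdeal J) (hIJ : I ≤ J) (hlm : lms J ⊆ lms I) : J ≤ I := by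
  intro f hf
  rw [← sum_homogeneousComponent f]
  refine Ideal.sum_mem I fun i _ => ?_
  have hgJ : homogeneousComponent i f ∈ J := hJ.1 f hf i
  rcases eq_or_ne (homogeneousComponent i f) 0 with h0 | h0
  · rw [h0]; exact zero_mem I
  · refine key hI hJ hIJ ?_ i _ hgJ (homogeneousComponent_isHomogeneous i f)
    intro f' hf'J hf'0 hf'd
    obtain ⟨g, hgI, hg0, hgd, hglm⟩ := hlm ⟨f', hf'J, hf'0, hf'd, rfl⟩
    exact ⟨g, hgI, hg0, hgd, hglm⟩

end TropACC

/-- **Ascending chain condition for tropical ideals.**  There is no infinite strictly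
ascending chain `I₁ ⊊ I₂ ⊊ I₃ ⊊ ⋯` of homogeneous tropical ideals in `R[x₀,…,xₙ]`. -/
theorem no_infinite_ascending_chain {n : ℕ} {R₀ : Type*}
    [LinearOrderedAddCommGroupWithTop R₀] :
    ¬ ∃ c : ℕ → Ideal (MvPolynomial (Fin (n + 1)) (Tropical R₀)),
        (∀ k, IsHomogTropicalIdeal (c k)) ∧ ∀ k, c k < c (k + 1) := by
  rintro ⟨c, hc, hlt⟩
  have hmono : ∀ i j : ℕ, i ≤ j → c i ≤ c j := by
    intro i j hij
    induction j with
    | zero => rw [Nat.le_zero.1 hij]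
    | succ j IH =>
      rcases Nat.lt_or_ge i (j + 1) with h | h
      · exact le_trans (IH (Nat.lt_succ_iff.1 h)) (le_of_lt (hlt j))
      · rw [Nat.le_antisymm hij h]
  have hwit : ∀ k : ℕ, ∃ u : Lex (TropACC.Mon n),
      u ∈ TropACC.lms (c (k + 1)) ∧ u ∉ TropACC.lms (c k) := by
    intro k
    by_contra h
    push_neg at h
    have hle : c (k + 1) ≤ c k :=
      TropACC.le_of_lms_subset (hc k) (hc (k + 1)) (le_of_lt (hlt k)) h
    exact absurd (lt_of_lt_of_le (hlt k) hle) (lt_irrefl _)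
  choose U hU1 hU2 using hwit
  -- Dickson's lemma
  have hpwo : Set.IsPWO (Set.univ : Set (Fin (n + 1) → ℕ)) :=
    Set.isPWO_univ_iff.2 inferInstance
  obtain ⟨i, j, hij, hle⟩ :=
    hpwo.exists_lt (f := fun k => (ofLex (U k) : (Fin (n + 1)) →₀ ℕ)) (fun _ => Set.mem_univ _)
  have hle' : ofLex (U i) ≤ ofLex (U j) := by
    intro a
    exact hle a
  have h1 : toLex (ofLex (U j)) ∈ TropACC.lms (c (i + 1)) :=
    TropACC.lms_upward (hU1 i) hle'
  have h2 : U j ∈ TropACC.lms (c j) := by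
    have : toLex (ofLex (U j)) = U j := rfl
    rw [this] at h1
    exact TropACC.lms_mono (hmono (i + 1) j hij) h1
  exact hU2 j h2
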